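/- In the one-dimensional Hegselmann–Krause dynamics with agents N = {1,…,n} and update rule x_i(t+1) = (Σ_{j : |x_i(t) − x_j(t)| ≤ 1} x_j(t)) / |{j : |x_i(t) − x_j(t)| ≤ 1}|, if x_i(0) ≤ x_j(0) for two agents i, j, then x_i(t) ≤ x_j(t) for all t ∈ ℕ. -/

import Mathlib

open Finset

lemma avg_le_avg_aux {α : Type*} [DecidableEq α] (s t : Finset α) (f : α → ℝ) (c d : ℝ)
    (hs : s.Nonempty) (ht : t.Nonempty)
    (hc : ∀ k ∈ t, c ≤ f k) (hst : ∀ k ∈ s \ t, f k ≤ c)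
    (hd : ∀ k ∈ s, f k ≤ d) (hts : ∀ k ∈ t \ s, d ≤ f k) :
    (∑ k ∈ s, f k) / s.card ≤ (∑ k ∈ t, f k) / t.card := by
  have hs0 : (0:ℝ) < s.card := by exact_mod_cast hs.card_pos
  have ht0 : (0:ℝ) < t.card := by exact_mod_cast ht.card_pos
  have hsplitS : ∑ k ∈ s ∩ t, f k + ∑ k ∈ s \ t, f k = ∑ k ∈ s, f k :=
    Finset.sum_inter_add_sum_sdiff s t f
  have hsplitT : ∑ k ∈ t ∩ s, f k + ∑ k ∈ t \ s, f k = ∑ k ∈ t, f k :=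
    Finset.sum_inter_add_sum_sdiff t s f
  rcases (s ∩ t).eq_empty_or_nonempty with hC | hC
  · have h1 : ∑ k ∈ s, f k ≤ s.card * c := by
      have := Finset.sum_le_card_nsmul s f c (fun k hk => by
        refine hst k (mem_sdiff.mpr ⟨hk, fun h => ?_⟩)
        have : k ∈ s ∩ t := mem_inter.mpr ⟨hk, h⟩
        simp [hC] at this)
      simpa [nsmul_eq_mul] using this
    have h2 : t.card * c ≤ ∑ k ∈ t, f k := by
      have := Finset.card_nsmul_le_sum t f c hc
      simpa [nsmul_eq_mul] using this
    calc (∑ k ∈ s, f k) / s.card ≤ c := by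
          rw [div_le_iff₀ hs0]; linarith [h1]
      _ ≤ (∑ k ∈ t, f k) / t.card := by
          rw [le_div_iff₀ ht0]; linarith [h2]
  · set C := s ∩ t with hCdef
    have hC0 : (0:ℝ) < C.card := by exact_mod_cast hC.card_pos
    set m := (∑ k ∈ C, f k) / C.card with hm
    have hsumC : ∑ k ∈ C, f k = C.card * m := by
      rw [hm, mul_div_assoc', eq_div_iff hC0.ne', mul_comm]
    have hcm : c ≤ m := by
      rw [hm, le_div_iff₀ hC0]
      have := Finset.card_nsmul_le_sum C f c (fun k hk => hc k (mem_inter.mp hk).2)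
      simpa [nsmul_eq_mul, mul_comm] using this
    have hmd : m ≤ d := by
      rw [hm, div_le_iff₀ hC0]
      have := Finset.sum_le_card_nsmul C f d (fun k hk => hd k (mem_inter.mp hk).1)
      simpa [nsmul_eq_mul, mul_comm] using this
    have hcardS : (s \ t).card + C.card = s.card := by
      rw [hCdef]; exact Finset.card_sdiff_add_card_inter s t
    have hcardT : (t \ s).card + (t ∩ s).card = t.card := Finset.card_sdiff_add_card_inter t s
    have hCcomm : t ∩ s = C := by rw [hCdef, inter_comm]
    have h1 : ∑ k ∈ s, f k ≤ s.card * m := by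
      have hsd : ∑ k ∈ s \ t, f k ≤ (s \ t).card * m := by
        have := Finset.sum_le_card_nsmul (s \ t) f c (fun k hk => hst k hk)
        have h2 : ((s \ t).card : ℝ) * c ≤ (s \ t).card * m := by
          apply mul_le_mul_of_nonneg_left hcm (Nat.cast_nonneg _)
        simp only [nsmul_eq_mul] at this
        linarith
      have : (s.card : ℝ) = (s \ t).card + C.card := by exact_mod_cast hcardS.symm
      rw [this]
      have := hsplitS
      nlinarith [hsumC]
    have h2 : t.card * m ≤ ∑ k ∈ t, f k := by
      have hsd : ((t \ s).card : ℝ) * m ≤ ∑ k ∈ t \ s, f k := by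
        have := Finset.card_nsmul_le_sum (t \ s) f d (fun k hk => hts k hk)
        simp only [nsmul_eq_mul] at this
        have h2 : ((t \ s).card : ℝ) * m ≤ (t \ s).card * d :=
          mul_le_mul_of_nonneg_left hmd (Nat.cast_nonneg _)
        linarith
      have hct : (t.card : ℝ) = (t \ s).card + C.card := by
        rw [← hCcomm]; exact_mod_cast hcardT.symm
      rw [hct]
      rw [hCcomm] at hsplitT
      nlinarith [hsumC]
    calc (∑ k ∈ s, f k) / s.card ≤ m := by rw [div_le_iff₀ hs0]; linarith
      _ ≤ (∑ k ∈ t, f k) / t.card := by rw [le_div_iff₀ ht0]; linarith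

/-- Order preservation in the 1-D Hegselmann–Krause dynamics. -/
theorem hk_order_preservation {n : ℕ} (x : Fin n → ℕ → ℝ)
    (hupd : ∀ i t, x i (t + 1) =
      (∑ j ∈ univ.filter (fun j => |x i t - x j t| ≤ 1), x j t) /
        (univ.filter (fun j => |x i t - x j t| ≤ 1)).card)
    (i j : Fin n) (h0 : x i 0 ≤ x j 0) :
    ∀ t : ℕ, x i t ≤ x j t := by
  intro t
  induction t with
  | zero => exact h0
  | succ t ih =>
    rw [hupd i t, hupd j t]
    set a := x i t with ha
    set b := x j t with hb
    set A := univ.filter (fun k => |a - x k t| ≤ 1) with hA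
    set B := univ.filter (fun k => |b - x k t| ≤ 1) with hB
    have hAne : A.Nonempty := ⟨i, by simp [hA, ← ha]⟩
    have hBne : B.Nonempty := ⟨j, by simp [hB, ← hb]⟩
    refine avg_le_avg_aux A B (fun k => x k t) (b - 1) (a + 1) hAne hBne ?_ ?_ ?_ ?_
    · intro k hk
      have : |b - x k t| ≤ 1 := by simpa [hB] using hk
      have := abs_le.mp this
      linarith [this.2]
    · intro k hk
      rw [mem_sdiff] at hk
      have h1 : |a - x k t| ≤ 1 := by simpa [hA] using hk.1
      have h2 : ¬ |b - x k t| ≤ 1 := by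
        intro h; exact hk.2 (by simp [hB, h])
      have h1' := abs_le.mp h1
      rcases abs_cases (b - x k t) with ⟨heq, _⟩ | ⟨heq, hneg⟩
      · push_neg at h2; rw [heq] at h2; linarith
      · push_neg at h2; rw [heq] at h2; linarith [h1'.1]
    · intro k hk
      have : |a - x k t| ≤ 1 := by simpa [hA] using hk
      have := abs_le.mp this
      linarith [this.1]
    · intro k hk
      rw [mem_sdiff] at hk
      have h1 : |b - x k t| ≤ 1 := by simpa [hB] using hk.1
      have h2 : ¬ |a - x k t| ≤ 1 := by
        intro h; exact hk.2 (by simp [hA, h])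
      have h1' := abs_le.mp h1
      rcases abs_cases (a - x k t) with ⟨heq, _⟩ | ⟨heq, hneg⟩
      · push_neg at h2; rw [heq] at h2; linarith
      · push_neg at h2; rw [heq] at h2; linarith
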